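/- Every monotone decreasing sequence that is statistically p-convergent order converges (in fact decreases) to its statistical p-limit: if xₙ ↓ (decreasing) in a lattice-normed Riesz space and xₙ →(st_p) x, then xₙ ↓ x, i.e., x = inf xₙ. -/

import Mathlib

open scoped Classical

/-- `K ⊆ ℕ` has natural density `d`. -/
def HasDensity (K : Set ℕ) (d : ℝ) : Prop :=
  Filter.Tendsto
    (fun n => (((Finset.range n).filter (fun k => k ∈ K)).card : ℝ) / n)
    Filter.atTop (nhds d)

/-- Statistical p-convergence of a sequence `x` to `x₀` in a lattice-normed space `(X, p, E)`:
there is a sequence `q` in `E`, decreasing along an index set `K` of density 1 with infimum `0`,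
dominating `p (x n - x₀)` on `K`. -/
def StatPConv {X E : Type*} [AddCommGroup X] [AddCommGroup E] [Lattice E]
    (p : X → E) (x : ℕ → X) (x₀ : X) : Prop :=
  ∃ (q : ℕ → E) (K : Set ℕ), HasDensity K 1 ∧
    (∀ m ∈ K, ∀ n ∈ K, m ≤ n → q n ≤ q m) ∧
    IsGLB (q '' K) 0 ∧
    ∀ n ∈ K, p (x n - x₀) ≤ q n

/-- A monotone decreasing, statistically p-convergent sequence decreases to its
statistical p-limit: `x ↓ a`, i.e. `a = inf (x n)`. -/
theorem statPConv_antitone_isGLB {X E : Type*} [AddCommGroup X] [Lattice X] [CovariantClass X X (· + ·) (· ≤ ·)] [Module ℝ X]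
    [AddCommGroup E] [Lattice E] [CovariantClass E E (· + ·) (· ≤ ·)] [Module ℝ E]
    (p : X → E)
    (hp0 : ∀ v : X, 0 ≤ p v)
    (hpeq : ∀ v : X, p v = 0 ↔ v = 0)
    (hpsmul : ∀ (c : ℝ) (v : X), p (c • v) = |c| • p v)
    (hptri : ∀ v w : X, p (v + w) ≤ p v + p w)
    (hpmono : ∀ v w : X, |v| ≤ |w| → p v ≤ p w)
    (x : ℕ → X) (a : X) (hdec : Antitone x) (hx : StatPConv p x a) :
    IsGLB (Set.range x) a := by
  obtain ⟨q, K, hK, hmono, hglb, hdom⟩ := hx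
  -- K is unbounded
  have hub : ∀ n : ℕ, ∃ k ∈ K, n ≤ k := by
    by_contra h
    push_neg at h
    obtain ⟨n, hn⟩ := h
    have h0 : Filter.Tendsto
        (fun m => (((Finset.range m).filter (fun k => k ∈ K)).card : ℝ) / m)
        Filter.atTop (nhds 0) := by
      apply tendsto_of_tendsto_of_tendsto_of_le_of_le' tendsto_const_nhds
        (tendsto_const_div_atTop_nhds_zero_nat (n : ℝ))
      · filter_upwards [Filter.eventually_ge_atTop 1] with m hm
        positivity
      · filter_upwards [Filter.eventually_ge_atTop 1] with m hm
        have hsub : (Finset.range m).filter (fun k => k ∈ K) ⊆ Finset.range n := by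
          intro k hk
          simp only [Finset.mem_filter, Finset.mem_range] at hk ⊢
          exact hn k hk.2
        have hcard : (((Finset.range m).filter (fun k => k ∈ K)).card : ℝ) ≤ n := by
          exact_mod_cast Finset.card_le_card hsub |>.trans (by simp)
        have hmpos : (0:ℝ) < m := by exact_mod_cast hm
        exact div_le_div_of_nonneg_right hcard hmpos.le -- may need rename
    exact absurd (tendsto_nhds_unique hK h0) one_ne_zero
  -- if c ≤ q l for all l ∈ K beyond k, then c ≤ 0
  have key : ∀ (k : ℕ) (c : E), (∀ l ∈ K, k ≤ l → c ≤ q l) → c ≤ 0 := by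
    intro k c hc
    apply hglb.2
    rintro _ ⟨m, hm, rfl⟩
    obtain ⟨l, hlK, hl⟩ := hub (max k m)
    exact (hc l hlK ((le_max_left _ _).trans hl)).trans
      (hmono m hm l hlK ((le_max_right _ _).trans hl))
  have vanish : ∀ v : X, p v ≤ 0 → v = 0 := fun v h => (hpeq v).1 (le_antisymm h (hp0 v))
  have pneg : ∀ v : X, p (-v) = p v := by
    intro v
    have := hpsmul (-1) v
    simpa using this
  -- From b - c ≤ x l - a for all suitable l, conclude b ≤ c
  have main : ∀ (k : ℕ) (b c : X), (∀ l ∈ K, k ≤ l → (b - c) ⊔ 0 ≤ |x l - a|) → b ≤ c := by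
    intro k b c hbc
    have hsup : (b - c) ⊔ 0 = 0 := by
      apply vanish
      apply key k
      intro l hl hkl
      have h2 : p ((b - c) ⊔ 0) ≤ p (x l - a) := by
        apply hpmono
        rw [abs_of_nonneg le_sup_right]; exact hbc l hl hkl
      exact h2.trans (hdom l hl)
    exact sub_nonpos.mp (sup_eq_right.mp hsup)
  constructor
  · rintro _ ⟨n, rfl⟩
    obtain ⟨k, hkK, hnk⟩ := hub n
    have hak : a ≤ x k := by
      apply main k a (x k)
      intro l hl hkl
      have h1 : a - x k ≤ a - x l := sub_le_sub_left (hdec hkl) a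
      calc (a - x k) ⊔ 0 ≤ (a - x l) ⊔ 0 := sup_le_sup_right h1 0
        _ ≤ |a - x l| := sup_le (le_abs_self _) (abs_nonneg _)
        _ = |x l - a| := abs_sub_comm _ _
    exact hak.trans (hdec hnk)
  · intro b hb
    apply main 0 b a
    intro l hl _
    calc (b - a) ⊔ 0 ≤ (x l - a) ⊔ 0 := sup_le_sup_right (sub_le_sub_right (hb ⟨l, rfl⟩) a) 0
      _ ≤ |x l - a| := sup_le (le_abs_self _) (abs_nonneg _)
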